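/- Let σ : A* → A* be a primitive morphism prolongable on a letter a ∈ A, and let n ∈ ℕ. If some word of length 2 of the language of σ does not occur in σⁿ(a), then there exist n pairwise distinct words u₁, …, uₙ of length 2, each in the language of σ, such that for every i ≤ n, u_i occurs in σⁱ(a) but not in σ^{i−1}(a). In particular, every length-2 word of the language occurs in σⁿ(a) as soon as n > (#A)². -/

import Mathlib

open List

/-- Extension of a substitution to words. -/
def applyW {A : Type*} (σ : A → List A) (w : List A) : List A := w.flatMap σ

/-- `σⁿ` as a map on letters. -/
def powL {A : Type*} (σ : A → List A) (n : ℕ) (a : A) : List A := (applyW σ)^[n] [a]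

/-- `σⁿ` as a map on words. -/
def iterW {A : Type*} (σ : A → List A) (n : ℕ) (w : List A) : List A := (applyW σ)^[n] w

/-- A substitution is non-erasing if no letter maps to the empty word. -/
def NonErasing {A : Type*} (σ : A → List A) : Prop := ∀ a, σ a ≠ []

/-- A substitution is primitive if some power maps any letter to a word containing
every letter. -/
def PrimitiveSub {A : Type*} (σ : A → List A) : Prop :=
  ∃ k : ℕ, ∀ b c : A, b ∈ powL σ k c

/-- `σ` is prolongable on `a` if `σ a = a u` with `u` nonempty. -/
def Prolongable {A : Type*} (σ : A → List A) (a : A) : Prop :=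
  ∃ u : List A, u ≠ [] ∧ σ a = a :: u

/-- `|σⁿ|`, the maximal length of the image of a letter under `σⁿ`. -/
def maxLen {A : Type*} [Fintype A] (σ : A → List A) (n : ℕ) : ℕ :=
  Finset.univ.sup fun a => (powL σ n a).length

/-- `⟨σⁿ⟩`, the minimal length of the image of a letter under `σⁿ`. -/
def minLen {A : Type*} [Fintype A] [Nonempty A] (σ : A → List A) (n : ℕ) : ℕ :=
  Finset.univ.inf' Finset.univ_nonempty fun a => (powL σ n a).length

/-- The factor `x_{[i,j)}` of a two-sided sequence. -/
def seg {A : Type*} (x : ℤ → A) (i j : ℤ) : List A :=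
  (List.range (j - i).toNat).map fun t => x (i + t)

/-- `w` is a factor of the two-sided sequence `x`. -/
def FactorOf {A : Type*} (x : ℤ → A) (w : List A) : Prop :=
  ∃ i : ℤ, w = seg x i (i + w.length)

/-- The language of a substitution: words occurring in some `σⁿ(c)`. -/
def LangOf {A : Type*} (σ : A → List A) (w : List A) : Prop :=
  ∃ n : ℕ, ∃ c : A, w <:+: powL σ n c

/-- The map `f^{(1)}` associated with the substitution `τ` and the sequence `x`;
the map `f^{(p)}` of `σ` is obtained as `F (powL σ p) x`. -/
def F {A : Type*} (τ : A → List A) (x : ℤ → A) (i : ℤ) : ℤ :=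
  if 0 ≤ i then (((seg x 0 i).flatMap τ).length : ℤ)
  else -(((seg x i 0).flatMap τ).length : ℤ)

/-- `x` is a (two-sided) fixed point of `τ`:  `τ (x i)` is the block of `x`
between `f^{(1)}(i)` and `f^{(1)}(i+1)`. -/
def IsFixedPoint {A : Type*} (τ : A → List A) (x : ℤ → A) : Prop :=
  ∀ i : ℤ, seg x (F τ x i) (F τ x (i + 1)) = τ (x i)

/-- `x` is an admissible fixed point of `τ`: it is a fixed point and the word
`x₋₁x₀` occurs in some `τⁿ(c)`. -/
def Admissible {A : Type*} (τ : A → List A) (x : ℤ → A) : Prop :=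
  IsFixedPoint τ x ∧ ∃ n : ℕ, ∃ c : A, [x (-1), x 0] <:+: powL τ n c

/-- `τ` is recognizable on `x` with constant `L`. -/
def RecogWith {A : Type*} (τ : A → List A) (x : ℤ → A) (L : ℤ) : Prop :=
  0 < L ∧ ∀ i m : ℤ,
    seg x (m - L) (m + L + 1) = seg x (F τ x i - L) (F τ x i + L + 1) →
    ∃ j : ℤ, m = F τ x j ∧ x i = x j

/-- `x` is `k`-power-free: no nonempty word `w` has `w^k` as a factor of `x`. -/
def PowerFree {A : Type*} (x : ℤ → A) (k : ℕ) : Prop :=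
  ∀ w : List A, w ≠ [] → ¬ FactorOf x (List.replicate k w).flatten

/-- `x` is recurrent: every factor occurs infinitely many times. -/
def Recurrent {A : Type*} (x : ℤ → A) : Prop :=
  ∀ w : List A, FactorOf x w → ∀ N : ℤ, ∃ i : ℤ, N ≤ i ∧ w = seg x i (i + w.length)

/-- Number of occurrences of `u` in `w`. -/
def occCount {A : Type*} [DecidableEq A] (u w : List A) : ℕ :=
  (List.range (w.length + 1)).countP fun i => decide (u <+: w.drop i)

/-- `r` is a return word to `u` in `x`. -/
def ReturnWordOf {A : Type*} [DecidableEq A] (x : ℤ → A) (u r : List A) : Prop :=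
  FactorOf x (r ++ u) ∧ u <+: (r ++ u) ∧ occCount u (r ++ u) = 2

/-- `r` is a return word to `u` in the language of `σ`. -/
def ReturnWordLang {A : Type*} [DecidableEq A] (σ : A → List A) (u r : List A) : Prop :=
  LangOf σ (r ++ u) ∧ u <+: (r ++ u) ∧ occCount u (r ++ u) = 2

/-- `x` is linearly recurrent with constant `K`. -/
def LinRec {A : Type*} [DecidableEq A] (x : ℤ → A) (K : ℕ) : Prop :=
  Recurrent x ∧ ∀ u r : List A, FactorOf x u → ReturnWordOf x u r → r.length ≤ K * u.length

/-- `x` is aperiodic (not periodic). -/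
def AperiodicSeq {A : Type*} (x : ℤ → A) : Prop :=
  ¬ ∃ p : ℤ, 0 < p ∧ ∀ i : ℤ, x (i + p) = x i

/-- Factor complexity of `x`. -/
noncomputable def complexity {A : Type*} (x : ℤ → A) (n : ℕ) : ℕ :=
  Set.ncard {w : List A | FactorOf x w ∧ w.length = n}

section Aux

variable {A : Type*}

lemma applyW_append (σ : A → List A) (v w : List A) :
    applyW σ (v ++ w) = applyW σ v ++ applyW σ w := by
  simp [applyW]

lemma applyW_cons (σ : A → List A) (b : A) (t : List A) :
    applyW σ (b :: t) = σ b ++ applyW σ t := by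
  simp [applyW]

lemma applyW_singleton (σ : A → List A) (b : A) : applyW σ [b] = σ b := by
  simp [applyW]

lemma iterW_succ' (σ : A → List A) (n : ℕ) (w : List A) :
    iterW σ (n + 1) w = applyW σ (iterW σ n w) :=
  Function.iterate_succ_apply' _ _ _

lemma iterW_succ (σ : A → List A) (n : ℕ) (w : List A) :
    iterW σ (n + 1) w = iterW σ n (applyW σ w) :=
  Function.iterate_succ_apply _ _ _

lemma iterW_nil (σ : A → List A) (n : ℕ) : iterW σ n ([] : List A) = [] := by
  induction n with
  | zero => rfl
  | succ k ih => rw [iterW_succ', ih]; rfl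

lemma iterW_append (σ : A → List A) (n : ℕ) (v w : List A) :
    iterW σ n (v ++ w) = iterW σ n v ++ iterW σ n w := by
  induction n with
  | zero => rfl
  | succ k ih => rw [iterW_succ', iterW_succ', iterW_succ', ih, applyW_append]

lemma iterW_add (σ : A → List A) (m k : ℕ) (w : List A) :
    iterW σ m (iterW σ k w) = iterW σ (m + k) w :=
  (Function.iterate_add_apply _ m k w).symm

lemma applyW_infix {σ : A → List A} {v w : List A} (h : v <:+: w) :
    applyW σ v <:+: applyW σ w := by
  obtain ⟨p, q, hpq⟩ := h
  exact ⟨applyW σ p, applyW σ q, by rw [← applyW_append, ← applyW_append, hpq]⟩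

lemma iterW_infix {σ : A → List A} (n : ℕ) {v w : List A} (h : v <:+: w) :
    iterW σ n v <:+: iterW σ n w := by
  obtain ⟨p, q, hpq⟩ := h
  exact ⟨iterW σ n p, iterW σ n q, by rw [← iterW_append, ← iterW_append, hpq]⟩

lemma prefix_iterW {σ : A → List A} {a : A} (ha : Prolongable σ a) {m n : ℕ}
    (h : m ≤ n) : iterW σ m [a] <+: iterW σ n [a] := by
  induction n, h using Nat.le_induction with
  | base => exact List.prefix_rfl
  | succ k hk ih =>
    refine ih.trans ?_
    obtain ⟨u, hu, hσa⟩ := ha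
    have h1 : applyW σ [a] = [a] ++ u := by rw [applyW_singleton, hσa]; rfl
    rw [iterW_succ, h1, iterW_append]
    exact ⟨iterW σ k u, rfl⟩

lemma infix_mono {σ : A → List A} {a : A} (ha : Prolongable σ a) {m n : ℕ}
    (h : m ≤ n) {v : List A} (hv : v <:+: iterW σ m [a]) :
    v <:+: iterW σ n [a] :=
  hv.trans (prefix_iterW ha h).isInfix

lemma nonErasing_of {σ : A → List A} (hσ : PrimitiveSub σ) {a : A}
    (ha : Prolongable σ a) : NonErasing σ := by
  obtain ⟨k, hk⟩ := hσ
  intro c hc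
  obtain ⟨u, hu, hσa⟩ := ha
  cases k with
  | zero =>
    have h1 : a ∈ powL σ 0 c := hk a c
    have h2 : a = c := by simpa [powL] using h1
    rw [← h2, hσa] at hc
    simp at hc
  | succ k =>
    have h1 : a ∈ powL σ (k + 1) c := hk a c
    have h2 : powL σ (k + 1) c = [] := by
      show iterW σ (k + 1) [c] = []
      rw [iterW_succ, applyW_singleton, hc, iterW_nil]
    rw [h2] at h1
    simp at h1

lemma le_length_applyW {σ : A → List A} (hne : NonErasing σ) (w : List A) :
    w.length ≤ (applyW σ w).length := by
  induction w with
  | nil => simp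
  | cons b t ih =>
    rw [applyW_cons, List.length_append, List.length_cons]
    have h1 : 0 < (σ b).length := List.length_pos_iff.mpr (hne b)
    omega

lemma le_length_iterW {σ : A → List A} (hne : NonErasing σ) (n : ℕ) (w : List A) :
    w.length ≤ (iterW σ n w).length := by
  induction n with
  | zero => exact le_rfl
  | succ k ih =>
    rw [iterW_succ']
    exact ih.trans (le_length_applyW hne _)

lemma two_le_length_iterW {σ : A → List A} (hne : NonErasing σ) {a : A}
    (ha : Prolongable σ a) (n : ℕ) : 2 ≤ (iterW σ (n + 1) [a]).length := by
  obtain ⟨u, hu, hσa⟩ := ha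
  rw [iterW_succ, applyW_singleton, hσa]
  have h1 := le_length_iterW hne n (a :: u)
  have h2 : 0 < u.length := List.length_pos_iff.mpr hu
  rw [List.length_cons] at h1
  omega

lemma prefix_of_prefix_append {x s t : List A} (h : x <+: s ++ t)
    (hl : x.length ≤ s.length) : x <+: s := by
  have hx : x = (s ++ t).take x.length := List.prefix_iff_eq_take.mp h
  rw [List.take_append_of_le_length hl] at hx
  rw [hx]
  exact List.take_prefix _ _

lemma infix_split {s t v : List A} (h : v <:+: s ++ t) :
    v <:+: s ∨ v <:+: t ∨
      ∃ v1 v2, v = v1 ++ v2 ∧ v1 ≠ [] ∧ v2 ≠ [] ∧ v1 <:+ s ∧ v2 <+: t := by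
  obtain ⟨p, q, hpq⟩ := h
  by_cases h1 : p.length + v.length ≤ s.length
  · left
    have hpre : p ++ v <+: s ++ t := ⟨q, by rw [← hpq]⟩
    have h2 : p ++ v <+: s := by
      apply prefix_of_prefix_append hpre
      rw [List.length_append]; omega
    obtain ⟨r, hr⟩ := h2
    exact ⟨p, r, by rw [← hr]⟩
  · by_cases h2 : s.length ≤ p.length
    · right; left
      have hp3 : p <+: s ++ t := ⟨v ++ q, by rw [← hpq]; simp [List.append_assoc]⟩
      have hs3 : s <+: s ++ t := ⟨t, rfl⟩
      obtain ⟨p', hp'⟩ := List.prefix_of_prefix_length_le hs3 hp3 h2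
      have ht : t = p' ++ v ++ q := by
        have he : s ++ (p' ++ (v ++ q)) = s ++ t := by
          rw [← hpq, ← hp']; simp [List.append_assoc]
        have := (List.append_inj he rfl).2
        rw [← this]; simp [List.append_assoc]
      exact ⟨p', q, by rw [ht]⟩
    · right; right
      push_neg at h1 h2
      set k := s.length - p.length with hk
      have hkv : k ≤ v.length := by omega
      have hkey : p ++ v.take k = s := by
        have hpre : p ++ v.take k <+: s ++ t := by
          refine ⟨v.drop k ++ q, ?_⟩
          rw [← hpq]
          rw [List.append_assoc, List.append_assoc, ← List.append_assoc (v.take k),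
            List.take_append_drop]
        have hlen : (p ++ v.take k).length = s.length := by
          rw [List.length_append, List.length_take]; omega
        exact (prefix_of_prefix_append hpre (le_of_eq hlen)).eq_of_length hlen
      refine ⟨v.take k, v.drop k, (List.take_append_drop _ _).symm, ?_, ?_, ⟨p, hkey⟩, ?_⟩
      · intro e
        have : (v.take k).length = k := by rw [List.length_take]; omega
        rw [e] at this
        simp at this
        omega
      · intro e
        have : (v.drop k).length = v.length - k := by rw [List.length_drop]
        rw [e] at this
        simp at this
        omega
      · refine ⟨q, ?_⟩
        have he : (p ++ v.take k) ++ (v.drop k ++ q) = s ++ t := by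
          rw [← hpq]
          rw [List.append_assoc, List.append_assoc, ← List.append_assoc (v.take k),
            List.take_append_drop]
        rw [hkey] at he
        exact (List.append_inj he rfl).2

lemma prefix_extract {σ : A → List A} (hne : NonErasing σ) :
    ∀ (w v : List A), v ≠ [] → v <+: applyW σ w →
      ∃ w', w' <+: w ∧ w' ≠ [] ∧ w'.length ≤ v.length ∧ v <+: applyW σ w' := by
  intro w
  induction w with
  | nil =>
    intro v hv h
    exact absurd (List.prefix_nil.mp h) hv
  | cons c t ih =>
    intro v hv h
    rw [applyW_cons] at h
    by_cases hl : v.length ≤ (σ c).length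
    · refine ⟨[c], ⟨t, rfl⟩, List.cons_ne_nil _ _, ?_, ?_⟩
      · have : 0 < v.length := List.length_pos_iff.mpr hv
        simpa using Nat.succ_le_of_lt this
      · rw [applyW_singleton]
        exact prefix_of_prefix_append h hl
    · push_neg at hl
      have hσc : σ c <+: v :=
        List.prefix_of_prefix_length_le ⟨applyW σ t, rfl⟩ h (le_of_lt hl)
      obtain ⟨v', hv'⟩ := hσc
      have hv'pre : v' <+: applyW σ t := by
        obtain ⟨r, hr⟩ := h
        refine ⟨r, ?_⟩
        have : σ c ++ (v' ++ r) = σ c ++ applyW σ t := by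
          rw [← List.append_assoc, hv', hr]
        exact (List.append_inj this rfl).2
      have hv'ne : v' ≠ [] := by
        intro e
        rw [e, List.append_nil] at hv'
        rw [← hv'] at hl
        omega
      obtain ⟨w0, hw0pre, hw0ne, hw0len, hw0⟩ := ih v' hv'ne hv'pre
      refine ⟨c :: w0, List.cons_prefix_cons.mpr ⟨rfl, hw0pre⟩, List.cons_ne_nil _ _, ?_, ?_⟩
      · have h1 : 0 < (σ c).length := List.length_pos_iff.mpr (hne c)
        have h2 : v.length = (σ c).length + v'.length := by
          rw [← hv', List.length_append]
        rw [List.length_cons]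
        omega
      · rw [applyW_cons]
        obtain ⟨r, hr⟩ := hw0
        exact ⟨r, by rw [← hv', List.append_assoc, hr]⟩

lemma infix_extract {σ : A → List A} (hne : NonErasing σ) :
    ∀ (w v : List A), v ≠ [] → v <:+: applyW σ w →
      ∃ w', w' <:+: w ∧ w' ≠ [] ∧ w'.length ≤ v.length ∧ v <:+: applyW σ w' := by
  intro w
  induction w with
  | nil =>
    intro v hv h
    exact absurd (List.infix_nil.mp h) hv
  | cons c t ih =>
    intro v hv h
    rw [applyW_cons] at h
    rcases infix_split h with h1 | h2 | ⟨v1, v2, hvsplit, hv1, hv2, hs, hp⟩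
    · refine ⟨[c], ⟨[], t, rfl⟩, List.cons_ne_nil _ _, ?_, by rw [applyW_singleton]; exact h1⟩
      have : 0 < v.length := List.length_pos_iff.mpr hv
      simpa using Nat.succ_le_of_lt this
    · obtain ⟨w', hw', h2', h3', h4'⟩ := ih v hv h2
      exact ⟨w', List.infix_cons hw', h2', h3', h4'⟩
    · obtain ⟨w0, hw0pre, hw0ne, hw0len, hw0⟩ := prefix_extract hne t v2 hv2 hp
      refine ⟨c :: w0, (List.cons_prefix_cons.mpr ⟨rfl, hw0pre⟩).isInfix,
        List.cons_ne_nil _ _, ?_, ?_⟩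
      · have h1 : 0 < v1.length := List.length_pos_iff.mpr hv1
        have h2 : v.length = v1.length + v2.length := by rw [hvsplit, List.length_append]
        rw [List.length_cons]
        omega
      · rw [applyW_cons]
        obtain ⟨p', hp'⟩ := hs
        obtain ⟨q', hq'⟩ := hw0
        refine ⟨p', q', ?_⟩
        rw [hvsplit, ← hp', ← hq']
        simp [List.append_assoc]

lemma mem_two {w : List A} {b : A} (hb : b ∈ w) (hw : 2 ≤ w.length) :
    ∃ v : List A, v.length = 2 ∧ b ∈ v ∧ v <:+: w := by
  obtain ⟨p, q, rfl⟩ := List.append_of_mem hb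
  cases q with
  | cons c q' => exact ⟨[b, c], rfl, by simp, ⟨p, q', by simp⟩⟩
  | nil =>
    rcases List.eq_nil_or_concat p with rfl | ⟨p', c, rfl⟩
    · simp at hw
    · exact ⟨[c, b], rfl, by simp, ⟨p', [], by simp⟩⟩

lemma mem_infix_singleton {w : List A} {b : A} (hb : b ∈ w) : [b] <:+: w := by
  obtain ⟨p, q, rfl⟩ := List.append_of_mem hb
  exact ⟨p, q, by simp⟩

lemma stab_step {σ : A → List A} {a : A} (hne : NonErasing σ) (ha : Prolongable σ a) {i : ℕ}
    (h : ∀ v : List A, v.length = 2 → v <:+: iterW σ (i + 1) [a] → v <:+: iterW σ i [a]) :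
    ∀ v : List A, v.length = 2 → v <:+: iterW σ (i + 2) [a] → v <:+: iterW σ (i + 1) [a] := by
  intro v hv2 hvin
  rw [show i + 2 = (i + 1) + 1 by omega, iterW_succ'] at hvin
  have hvne : v ≠ [] := by intro e; rw [e] at hv2; simp at hv2
  obtain ⟨w', hw'in, hw'ne, hw'len, hvw'⟩ := infix_extract hne _ v hvne hvin
  rw [hv2] at hw'len
  match w', hw'ne, hw'len, hw'in, hvw' with
  | [b], _, _, hw'in, hvw' =>
    have hb : b ∈ iterW σ (i + 1) [a] := hw'in.subset (by simp)
    obtain ⟨v', hv'2, hbv', hv'in⟩ := mem_two hb (two_le_length_iterW hne ha i)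
    have hv'i : v' <:+: iterW σ i [a] := h v' hv'2 hv'in
    have hb' : b ∈ iterW σ i [a] := hv'i.subset hbv'
    have h1 : applyW σ [b] <:+: applyW σ (iterW σ i [a]) :=
      applyW_infix (mem_infix_singleton hb')
    rw [← iterW_succ'] at h1
    exact hvw'.trans h1
  | [b, c], _, _, hw'in, hvw' =>
    have h1 : [b, c] <:+: iterW σ i [a] := h [b, c] rfl hw'in
    have h2 : applyW σ [b, c] <:+: applyW σ (iterW σ i [a]) := applyW_infix h1
    rw [← iterW_succ'] at h2
    exact hvw'.trans h2

lemma stab_all {σ : A → List A} {a : A} (hne : NonErasing σ) (ha : Prolongable σ a) {i : ℕ}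
    (h : ∀ v : List A, v.length = 2 → v <:+: iterW σ (i + 1) [a] → v <:+: iterW σ i [a]) :
    ∀ j, i ≤ j →
      ∀ v : List A, v.length = 2 → v <:+: iterW σ (j + 1) [a] → v <:+: iterW σ j [a] := by
  intro j hj
  induction j, hj using Nat.le_induction with
  | base => exact h
  | succ k hk ihk => exact stab_step hne ha ihk

lemma stab_down {σ : A → List A} {a : A} (hne : NonErasing σ) (ha : Prolongable σ a) {i : ℕ}
    (h : ∀ v : List A, v.length = 2 → v <:+: iterW σ (i + 1) [a] → v <:+: iterW σ i [a]) :
    ∀ m, i ≤ m →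
      ∀ v : List A, v.length = 2 → v <:+: iterW σ m [a] → v <:+: iterW σ i [a] := by
  intro m hm
  induction m, hm using Nat.le_induction with
  | base => intro v _ hv; exact hv
  | succ k hk ihk =>
    intro v h2 hv
    exact ihk v h2 (stab_all hne ha h k hk v h2 hv)

lemma lang_to_a {σ : A → List A} (hσ : PrimitiveSub σ) {a : A} {w : List A}
    (hw : LangOf σ w) : ∃ M : ℕ, w <:+: iterW σ M [a] := by
  obtain ⟨m, c, hwc⟩ := hw
  obtain ⟨k, hk⟩ := hσ
  have hc : c ∈ iterW σ k [a] := hk c a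
  have h1 : iterW σ m [c] <:+: iterW σ m (iterW σ k [a]) :=
    iterW_infix m (mem_infix_singleton hc)
  rw [iterW_add] at h1
  exact ⟨m + k, (show w <:+: iterW σ m [c] from hwc).trans h1⟩

end Aux

theorem stmt6 {A : Type*} [Fintype A] (σ : A → List A) (hσ : PrimitiveSub σ)
    (a : A) (ha : Prolongable σ a) :
    (∀ n : ℕ,
      (∃ w : List A, w.length = 2 ∧ LangOf σ w ∧ ¬ w <:+: iterW σ n [a]) →
      ∃ u : Fin n → List A, Function.Injective u ∧
        ∀ i : Fin n, (u i).length = 2 ∧ LangOf σ (u i) ∧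
          u i <:+: iterW σ ((i : ℕ) + 1) [a] ∧ ¬ u i <:+: iterW σ (i : ℕ) [a]) ∧
    (∀ n : ℕ, Fintype.card A ^ 2 < n →
      ∀ w : List A, w.length = 2 → LangOf σ w → w <:+: iterW σ n [a]) := by
  have hne : NonErasing σ := nonErasing_of hσ ha
  have hpart1 : ∀ n : ℕ,
      (∃ w : List A, w.length = 2 ∧ LangOf σ w ∧ ¬ w <:+: iterW σ n [a]) →
      ∃ u : Fin n → List A, Function.Injective u ∧
        ∀ i : Fin n, (u i).length = 2 ∧ LangOf σ (u i) ∧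
          u i <:+: iterW σ ((i : ℕ) + 1) [a] ∧ ¬ u i <:+: iterW σ (i : ℕ) [a] := by
    intro n hw
    obtain ⟨w, hw2, hwlang, hwnot⟩ := hw
    have key : ∀ i, i < n → ∃ u : List A, u.length = 2 ∧
        u <:+: iterW σ (i + 1) [a] ∧ ¬ u <:+: iterW σ i [a] := by
      intro i hi
      by_contra hcon
      push_neg at hcon
      obtain ⟨M, hM⟩ := lang_to_a hσ (a := a) hwlang
      rcases le_or_gt M n with hMn | hnM
      · exact hwnot (infix_mono ha hMn hM)
      · have h1 : w <:+: iterW σ i [a] :=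
          stab_down hne ha hcon M (by omega) w hw2 hM
        exact hwnot (infix_mono ha (by omega : i ≤ n) h1)
    choose u hu2 hu1 hu0 using fun i : Fin n => key i i.2
    refine ⟨u, ?_, fun i => ⟨hu2 i, ⟨(i : ℕ) + 1, a, hu1 i⟩, hu1 i, hu0 i⟩⟩
    intro i j hij
    rcases lt_trichotomy (i : ℕ) (j : ℕ) with h | h | h
    · have h1 : u i <:+: iterW σ (j : ℕ) [a] :=
        infix_mono ha (by omega : (i : ℕ) + 1 ≤ (j : ℕ)) (hu1 i)
      rw [hij] at h1
      exact absurd h1 (hu0 j)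
    · exact Fin.ext h
    · have h1 : u j <:+: iterW σ (i : ℕ) [a] :=
        infix_mono ha (by omega : (j : ℕ) + 1 ≤ (i : ℕ)) (hu1 j)
      rw [← hij] at h1
      exact absurd h1 (hu0 i)
  refine ⟨hpart1, ?_⟩
  intro n hn w hw2 hwlang
  by_contra hcon
  obtain ⟨u, huinj, hu⟩ := hpart1 n ⟨w, hw2, hwlang, hcon⟩
  have h2 : ∀ k : Fin n, u k = [(u k).headD a, (u k).tail.headD a] := by
    intro k
    obtain ⟨x, y, hxy⟩ := List.length_eq_two.mp (hu k).1
    rw [hxy]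
    simp
  have hinj2 : Function.Injective
      (fun i : Fin n => ((u i).headD a, (u i).tail.headD a)) := by
    intro i j hij
    apply huinj
    simp only [Prod.mk.injEq] at hij
    rw [h2 i, h2 j, hij.1, hij.2]
  have hcard := Fintype.card_le_of_injective _ hinj2
  rw [Fintype.card_fin, Fintype.card_prod] at hcard
  have hsq : Fintype.card A ^ 2 = Fintype.card A * Fintype.card A := sq (Fintype.card A)
  omega
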